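/- Let A ∈ ℂ^{n×n} with index k. Then the matrix X = A^k (A^{k+1})† satisfies X A^{k+1} = A^k. -/
import Mathlib

open Matrix

/-- `X` is the Moore-Penrose inverse of `A`. -/
def IsMoorePenrose {m n : ℕ} (A : Matrix (Fin m) (Fin n) ℂ)
    (X : Matrix (Fin n) (Fin m) ℂ) : Prop :=
  A * X * A = A ∧ X * A * X = X ∧ (A * X)ᴴ = A * X ∧ (X * A)ᴴ = X * A

lemma range_pow_succ_eq {n : ℕ} (B : Matrix (Fin n) (Fin n) ℂ) (k : ℕ)
    (h : (B ^ k).rank = (B ^ (k + 1)).rank) :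
    LinearMap.range (B ^ (k + 1)).mulVecLin = LinearMap.range (B ^ k).mulVecLin := by
  have hle : LinearMap.range (B ^ (k + 1)).mulVecLin ≤ LinearMap.range (B ^ k).mulVecLin := by
    rw [pow_succ, Matrix.mulVecLin_mul]
    exact LinearMap.range_comp_le_range _ _
  refine Submodule.eq_of_le_of_finrank_eq hle ?_
  exact h.symm

lemma exists_factor {n : ℕ} (B : Matrix (Fin n) (Fin n) ℂ) (k : ℕ)
    (h : (B ^ k).rank = (B ^ (k + 1)).rank) :
    ∃ D : Matrix (Fin n) (Fin n) ℂ, B ^ k = B ^ (k + 1) * D := by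
  have hr := range_pow_succ_eq B k h
  have hv : ∀ j : Fin n, ∃ v : Fin n → ℂ,
      (B ^ (k + 1)).mulVec v = fun i => (B ^ k) i j := by
    intro j
    have : (fun i => (B ^ k) i j) ∈ LinearMap.range (B ^ k).mulVecLin := by
      refine ⟨Pi.single j 1, ?_⟩
      ext i
      simp [Matrix.mulVecLin, Matrix.mulVec_single]
    rw [← hr] at this
    obtain ⟨v, hv⟩ := this
    exact ⟨v, hv⟩
  choose v hv using hv
  refine ⟨Matrix.of fun i j => v j i, ?_⟩
  ext i j
  have := congrFun (hv j) i
  simpa [Matrix.mul_apply, Matrix.mulVec, dotProduct] using this.symm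

theorem stmt_6 {n : ℕ} (A : Matrix (Fin n) (Fin n) ℂ) (k : ℕ)
    (hk : (A ^ k).rank = (A ^ (k + 1)).rank)
    (hmin : ∀ j : ℕ, (A ^ j).rank = (A ^ (j + 1)).rank → k ≤ j)
    (P : Matrix (Fin n) (Fin n) ℂ) (hP : IsMoorePenrose (A ^ (k + 1)) P) :
    (A ^ k * P) * A ^ (k + 1) = A ^ k := by
  open ComplexOrder in
  have hB : ((Aᴴ) ^ k).rank = ((Aᴴ) ^ (k + 1)).rank := by
    rw [← conjTranspose_pow, ← conjTranspose_pow, rank_conjTranspose, rank_conjTranspose, hk]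
  obtain ⟨D, hD⟩ := exists_factor (Aᴴ) k hB
  have hC : A ^ k = Dᴴ * A ^ (k + 1) := by
    have := congrArg conjTranspose hD
    simpa [conjTranspose_mul, conjTranspose_pow] using this
  calc (A ^ k * P) * A ^ (k + 1)
      = Dᴴ * (A ^ (k + 1) * P * A ^ (k + 1)) := by rw [hC]; simp only [Matrix.mul_assoc]
    _ = Dᴴ * A ^ (k + 1) := by rw [hP.1]
    _ = A ^ k := hC.symm
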